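/- Let C ⊆ (Fin n → ZMod 2) be a self-orthogonal F₂-linear code. Then Λ_max(ψ_C) = |C|^{−1/2}; that is, the geometric entanglement of spins of the CSS state ψ_C of self-orthogonal type is E_G(ψ_C) = log₂|C|. (Theorem 8, which in particular yields the geometric entanglement n_p − 2 of color code ground states on arbitrary 2-colexes.) -/

import Mathlib

open scoped BigOperators
open scoped Classical

noncomputable section

namespace GeomEnt

def qInner {n : ℕ} (φ ψ : (Fin n → ZMod 2) → ℂ) : ℂ :=
  ∑ x : Fin n → ZMod 2, (starRingEnd ℂ) (φ x) * ψ x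

def IsProductState {n : ℕ} (Φ : (Fin n → ZMod 2) → ℂ) : Prop :=
  ∃ φ : Fin n → ZMod 2 → ℂ,
    (∀ i, ‖φ i 0‖ ^ 2 + ‖φ i 1‖ ^ 2 = 1) ∧
    ∀ x, Φ x = ∏ i, φ i (x i)

def LambdaMax {n : ℕ} (ψ : (Fin n → ZMod 2) → ℂ) : ℝ :=
  sSup { r : ℝ | ∃ Φ, IsProductState Φ ∧ r = ‖qInner Φ ψ‖ }

def EG {n : ℕ} (ψ : (Fin n → ZMod 2) → ℂ) : ℝ :=
  - Real.logb 2 (LambdaMax ψ ^ 2)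

def codeState {n : ℕ} (C : Set (Fin n → ZMod 2)) : (Fin n → ZMod 2) → ℂ :=
  fun x => if x ∈ C then (((Real.sqrt (Nat.card C))⁻¹ : ℝ) : ℂ) else 0

private lemma zmod2_cases : ∀ z : ZMod 2, z = 0 ∨ z = 1 := by decide

private lemma fun_add_self {n : ℕ} (x : Fin n → ZMod 2) : x + x = 0 := by
  funext i
  have : ∀ z : ZMod 2, z + z = 0 := by decide
  exact this _

private lemma two_term_cs {p q x y : ℝ} (hx : 0 ≤ x) (hy : 0 ≤ y)
    (hpq : p^2 + q^2 = 1) : (p*x + q*y)^2 ≤ x^2 + y^2 := by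
  nlinarith [sq_nonneg (p*y - q*x)]

private lemma key {n : ℕ} (a : Fin n → ZMod 2 → ℂ)
    (ha : ∀ i, ‖a i 0‖ ^ 2 + ‖a i 1‖ ^ 2 = 1)
    (t : Finset (Fin n)) :
    ∀ C W : Finset (Fin n → ZMod 2),
      (∀ c ∈ C, ∀ c' ∈ C, c + c' ∈ C) →
      (∀ w ∈ W, ∀ c ∈ C, w + c ∈ W) →
      (∀ c ∈ C, ∀ w ∈ W, ∑ i ∈ t, c i * w i = 0) →
      (∀ c ∈ C, ∀ i, i ∉ t → c i = 0) →
      (∀ w ∈ W, ∀ i, i ∉ t → w i = 0) →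
      ∑ w ∈ W, ‖∑ c ∈ C, ∏ i ∈ t, a i ((w + c) i)‖ ^ 2 ≤ (C.card : ℝ) := by
  induction t using Finset.induction_on with
  | empty =>
    intro C W hCadd hWC horth hsC hsW
    have hC : ∀ c ∈ C, c = (0 : Fin n → ZMod 2) :=
      fun c hc => funext fun i => hsC c hc i (Finset.notMem_empty i)
    have hW : ∀ w ∈ W, w = (0 : Fin n → ZMod 2) :=
      fun w hw => funext fun i => hsW w hw i (Finset.notMem_empty i)
    have hCc : C.card ≤ 1 := Finset.card_le_one.mpr (fun x hx y hy => (hC x hx).trans (hC y hy).symm)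
    have hWc : W.card ≤ 1 := Finset.card_le_one.mpr (fun x hx y hy => (hW x hx).trans (hW y hy).symm)
    have e1 : ∀ w : Fin n → ZMod 2,
        (∑ c ∈ C, ∏ i ∈ (∅ : Finset (Fin n)), a i ((w + c) i)) = (C.card : ℂ) := by
      intro w; simp
    calc ∑ w ∈ W, ‖∑ c ∈ C, ∏ i ∈ (∅ : Finset (Fin n)), a i ((w + c) i)‖ ^ 2
        = ∑ _w ∈ W, (C.card : ℝ)^2 := by
          refine Finset.sum_congr rfl fun w _ => ?_
          rw [e1 w, Complex.norm_natCast]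
      _ = (W.card : ℝ) * (C.card : ℝ)^2 := by rw [Finset.sum_const, nsmul_eq_mul]
      _ ≤ (C.card : ℝ) := by
          have h1 : (C.card:ℝ) ≤ 1 := by exact_mod_cast hCc
          have h2 : (W.card:ℝ) ≤ 1 := by exact_mod_cast hWc
          have h3 : (0:ℝ) ≤ (C.card:ℝ) := Nat.cast_nonneg _
          have h4 : (0:ℝ) ≤ (W.card:ℝ) := Nat.cast_nonneg _
          nlinarith
  | @insert i₀ t hi ih =>
    intro C W hCadd hWC horth hsC hsW
    set f : (Fin n → ZMod 2) → (Fin n → ZMod 2) := fun x => Function.update x i₀ 0 with hfdef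
    have hfi₀ : ∀ x, f x i₀ = 0 := fun x => Function.update_self _ _ _
    have hfj : ∀ (x : Fin n → ZMod 2) (j : Fin n), j ≠ i₀ → f x j = x j :=
      fun x j hj => Function.update_of_ne hj _ _
    have hmemt : ∀ j ∈ t, j ≠ i₀ := fun j hj h => hi (h ▸ hj)
    by_cases hC0 : ∀ c ∈ C, c i₀ = 0
    · -- CASE AB : C vanishes at i₀
      set G : (Fin n → ZMod 2) → ℂ := fun u => ∑ c ∈ C, ∏ i ∈ t, a i ((u + c) i) with hGdef
      have hGt : ∀ u v : Fin n → ZMod 2, (∀ i ∈ t, u i = v i) → G u = G v := by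
        intro u v huv
        refine Finset.sum_congr rfl fun c _ => Finset.prod_congr rfl fun i hit => ?_
        show a i (u i + c i) = a i (v i + c i)
        rw [huv i hit]
      have hsplit : ∀ w, (∑ c ∈ C, ∏ i ∈ insert i₀ t, a i ((w + c) i))
          = a i₀ (w i₀) * G w := by
        intro w
        rw [hGdef, Finset.mul_sum]
        refine Finset.sum_congr rfl fun c hc => ?_
        rw [Finset.prod_insert hi]
        have h1 : (w + c) i₀ = w i₀ := by
          show w i₀ + c i₀ = w i₀
          rw [hC0 c hc, add_zero]
        rw [h1]
      have hortht : ∀ c ∈ C, ∀ w ∈ W, ∑ i ∈ t, c i * w i = 0 := by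
        intro c hc w hw
        have h := horth c hc w hw
        rw [Finset.sum_insert hi, hC0 c hc, zero_mul, zero_add] at h
        exact h
      have hsCt : ∀ c ∈ C, ∀ i, i ∉ t → c i = 0 := by
        intro c hc i hit
        by_cases h : i = i₀
        · exact h ▸ hC0 c hc
        · exact hsC c hc i (by simp [Finset.mem_insert, h, hit])
      set W₀ := W.filter (fun w => w i₀ = 0) with hW₀
      set W₁ := W.filter (fun w => ¬ w i₀ = 0) with hW₁
      have hW₀sub : W₀ ⊆ W := Finset.filter_subset _ _
      have hW₁sub : W₁ ⊆ W := Finset.filter_subset _ _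
      have ihW₀ : ∑ w ∈ W₀, ‖G w‖ ^ 2 ≤ (C.card : ℝ) := by
        refine ih C W₀ hCadd ?_ ?_ hsCt ?_
        · intro w hw c hc
          refine Finset.mem_filter.mpr ⟨hWC w (hW₀sub hw) c hc, ?_⟩
          have h2 := (Finset.mem_filter.mp hw).2
          show w i₀ + c i₀ = 0
          rw [h2, hC0 c hc, add_zero]
        · intro c hc w hw; exact hortht c hc w (hW₀sub hw)
        · intro w hw i hit
          by_cases h : i = i₀
          · exact h ▸ (Finset.mem_filter.mp hw).2
          · exact hsW w (hW₀sub hw) i (by simp [Finset.mem_insert, h, hit])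
      have hinj₁ : ∀ x ∈ W₁, ∀ y ∈ W₁, f x = f y → x = y := by
        intro x hx y hy hxy
        funext j
        by_cases h : j = i₀
        · subst h
          have hx1 : x j = 1 := (zmod2_cases _).resolve_left (Finset.mem_filter.mp hx).2
          have hy1 : y j = 1 := (zmod2_cases _).resolve_left (Finset.mem_filter.mp hy).2
          rw [hx1, hy1]
        · have h2 := congrFun hxy j
          rwa [hfj x j h, hfj y j h] at h2
      have hsum₁ : ∑ y ∈ W₁.image f, ‖G y‖ ^ 2 = ∑ w ∈ W₁, ‖G w‖ ^ 2 := by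
        rw [Finset.sum_image hinj₁]
        exact Finset.sum_congr rfl fun w _ => by
          rw [hGt (f w) w (fun i hit => hfj w i (hmemt i hit))]
      have ihW₁ : ∑ y ∈ W₁.image f, ‖G y‖ ^ 2 ≤ (C.card : ℝ) := by
        refine ih C (W₁.image f) hCadd ?_ ?_ hsCt ?_
        · intro y hy c hc
          obtain ⟨w, hw, rfl⟩ := Finset.mem_image.mp hy
          have hfw : f w + c = f (w + c) := by
            funext j
            by_cases h : j = i₀
            · subst h
              show f w j + c j = f (w + c) j
              rw [hfi₀, hfi₀, hC0 c hc, add_zero]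
            · show f w j + c j = f (w + c) j
              rw [hfj _ _ h, hfj _ _ h]
              rfl
          rw [hfw]
          refine Finset.mem_image.mpr ⟨w + c, ?_, rfl⟩
          refine Finset.mem_filter.mpr ⟨hWC w (hW₁sub hw) c hc, ?_⟩
          have h2 := (Finset.mem_filter.mp hw).2
          show ¬ (w i₀ + c i₀ = 0)
          rw [hC0 c hc, add_zero]
          exact h2
        · intro c hc y hy
          obtain ⟨w, hw, rfl⟩ := Finset.mem_image.mp hy
          have h2 : ∑ i ∈ t, c i * f w i = ∑ i ∈ t, c i * w i :=
            Finset.sum_congr rfl fun i hit => by rw [hfj w i (hmemt i hit)]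
          rw [h2]
          exact hortht c hc w (hW₁sub hw)
        · intro y hy i hit
          obtain ⟨w, hw, rfl⟩ := Finset.mem_image.mp hy
          by_cases h : i = i₀
          · exact h ▸ hfi₀ w
          · rw [hfj w i h]
            exact hsW w (hW₁sub hw) i (by simp [Finset.mem_insert, h, hit])
      calc ∑ w ∈ W, ‖∑ c ∈ C, ∏ i ∈ insert i₀ t, a i ((w + c) i)‖ ^ 2
          = ∑ w ∈ W, ‖a i₀ (w i₀)‖ ^ 2 * ‖G w‖ ^ 2 := by
            refine Finset.sum_congr rfl fun w _ => ?_
            rw [hsplit w, norm_mul, mul_pow]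
        _ = ∑ w ∈ W₀, ‖a i₀ (w i₀)‖ ^ 2 * ‖G w‖ ^ 2
            + ∑ w ∈ W₁, ‖a i₀ (w i₀)‖ ^ 2 * ‖G w‖ ^ 2 :=
            (Finset.sum_filter_add_sum_filter_not W _ _).symm
        _ = ‖a i₀ 0‖ ^ 2 * (∑ w ∈ W₀, ‖G w‖ ^ 2)
            + ‖a i₀ 1‖ ^ 2 * (∑ w ∈ W₁, ‖G w‖ ^ 2) := by
            rw [Finset.mul_sum, Finset.mul_sum]
            congr 1
            · refine Finset.sum_congr rfl fun w hw => ?_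
              rw [(Finset.mem_filter.mp hw).2]
            · refine Finset.sum_congr rfl fun w hw => ?_
              rw [(zmod2_cases _).resolve_left (Finset.mem_filter.mp hw).2]
        _ ≤ ‖a i₀ 0‖ ^ 2 * (C.card : ℝ) + ‖a i₀ 1‖ ^ 2 * (C.card : ℝ) := by
            refine add_le_add ?_ ?_
            · exact mul_le_mul_of_nonneg_left ihW₀ (sq_nonneg _)
            · exact mul_le_mul_of_nonneg_left (hsum₁ ▸ ihW₁) (sq_nonneg _)
        _ = (C.card : ℝ) := by rw [← add_mul, ha i₀, one_mul]
    · -- CASE C : some h₀ ∈ C has h₀ i₀ = 1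
      push_neg at hC0
      obtain ⟨h₀, hh₀C, hh₀⟩ := hC0
      have hh₀1 : h₀ i₀ = 1 := (zmod2_cases _).resolve_left hh₀
      set C₀ := C.filter (fun c => c i₀ = 0) with hC₀def
      have hC₀sub : C₀ ⊆ C := Finset.filter_subset _ _
      have hC₀i₀ : ∀ c ∈ C₀, c i₀ = 0 := fun c hc => (Finset.mem_filter.mp hc).2
      have hC₀add : ∀ c ∈ C₀, ∀ c' ∈ C₀, c + c' ∈ C₀ := by
        intro c hc c' hc'
        refine Finset.mem_filter.mpr ⟨hCadd c (hC₀sub hc) c' (hC₀sub hc'), ?_⟩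
        show c i₀ + c' i₀ = 0
        rw [hC₀i₀ c hc, hC₀i₀ c' hc', add_zero]
      have himg : C.filter (fun c => ¬ c i₀ = 0) = C₀.image (· + h₀) := by
        ext c
        simp only [Finset.mem_filter, Finset.mem_image]
        constructor
        · rintro ⟨hcC, hc1⟩
          refine ⟨c + h₀, Finset.mem_filter.mpr ⟨hCadd c hcC h₀ hh₀C, ?_⟩, ?_⟩
          · have h1 : c i₀ = 1 := (zmod2_cases _).resolve_left hc1
            show c i₀ + h₀ i₀ = 0
            rw [h1, hh₀1]; decide
          · rw [add_assoc, fun_add_self, add_zero]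
        · rintro ⟨c', hc', rfl⟩
          refine ⟨hCadd c' (hC₀sub hc') h₀ hh₀C, ?_⟩
          show ¬ (c' i₀ + h₀ i₀ = 0)
          rw [hC₀i₀ c' hc', hh₀1]; decide
      have hcard : (C.card : ℝ) = 2 * (C₀.card : ℝ) := by
        have h1 : C₀.card + (C.filter (fun c => ¬ c i₀ = 0)).card = C.card :=
          Finset.card_filter_add_card_filter_not (s := C) (fun c => c i₀ = 0)
        have h2 : (C.filter (fun c => ¬ c i₀ = 0)).card = C₀.card := by
          rw [himg, Finset.card_image_of_injective _ (add_left_injective h₀)]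
        rw [h2] at h1
        push_cast [← h1]
        ring
      set G : (Fin n → ZMod 2) → ℂ := fun u => ∑ c ∈ C₀, ∏ i ∈ t, a i ((u + c) i) with hGdef
      have hGt : ∀ u v : Fin n → ZMod 2, (∀ i ∈ t, u i = v i) → G u = G v := by
        intro u v huv
        refine Finset.sum_congr rfl fun c _ => Finset.prod_congr rfl fun i hit => ?_
        show a i (u i + c i) = a i (v i + c i)
        rw [huv i hit]
      have hinner : ∀ w, (∑ c ∈ C, ∏ i ∈ insert i₀ t, a i ((w + c) i))
          = a i₀ (w i₀) * G w + a i₀ (w i₀ + 1) * G (w + h₀) := by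
        intro w
        rw [← Finset.sum_filter_add_sum_filter_not C (fun c => c i₀ = 0)]
        congr 1
        · rw [hGdef, Finset.mul_sum]
          refine Finset.sum_congr rfl fun c hc => ?_
          rw [Finset.prod_insert hi]
          have h1 : (w + c) i₀ = w i₀ := by
            show w i₀ + c i₀ = w i₀
            rw [(Finset.mem_filter.mp hc).2, add_zero]
          rw [h1]
        · rw [himg, Finset.sum_image (fun x _ y _ h => add_left_injective h₀ h),
            hGdef, Finset.mul_sum]
          refine Finset.sum_congr rfl fun c hc => ?_
          rw [Finset.prod_insert hi]
          have h1 : (w + (c + h₀)) i₀ = w i₀ + 1 := by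
            show w i₀ + (c i₀ + h₀ i₀) = w i₀ + 1
            rw [hC₀i₀ c hc, hh₀1, zero_add]
          rw [h1]
          congr 1
          refine Finset.prod_congr rfl fun i _ => ?_
          show a i (w i + (c i + h₀ i)) = a i ((w i + h₀ i) + c i)
          congr 1
          ring
      have habs : ∀ w, ‖∑ c ∈ C, ∏ i ∈ insert i₀ t, a i ((w + c) i)‖ ^ 2
          ≤ ‖G w‖ ^ 2 + ‖G (w + h₀)‖ ^ 2 := by
        intro w
        have hpq : ‖a i₀ (w i₀)‖ ^ 2 + ‖a i₀ (w i₀ + 1)‖ ^ 2 = 1 := by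
          rcases zmod2_cases (w i₀) with h | h <;> rw [h]
          · simpa using ha i₀
          · have h11 : (1 : ZMod 2) + 1 = 0 := by decide
            rw [h11]
            linarith [ha i₀]
        have h1 : ‖∑ c ∈ C, ∏ i ∈ insert i₀ t, a i ((w + c) i)‖
            ≤ ‖a i₀ (w i₀)‖ * ‖G w‖
              + ‖a i₀ (w i₀ + 1)‖ * ‖G (w + h₀)‖ := by
          rw [hinner w]
          refine le_trans (norm_add_le _ _) (le_of_eq ?_)
          rw [norm_mul, norm_mul]
        have h2 := pow_le_pow_left₀ (norm_nonneg _) h1 2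
        exact le_trans h2 (two_term_cs (norm_nonneg _) (norm_nonneg _) hpq)
      have himgW : W.image (· + h₀) = W := by
        ext w
        simp only [Finset.mem_image]
        constructor
        · rintro ⟨w', hw', rfl⟩; exact hWC w' hw' h₀ hh₀C
        · intro hw
          exact ⟨w + h₀, hWC w hw h₀ hh₀C, by rw [add_assoc, fun_add_self, add_zero]⟩
      have hre : ∑ w ∈ W, ‖G (w + h₀)‖ ^ 2 = ∑ w ∈ W, ‖G w‖ ^ 2 := by
        conv_rhs => rw [← himgW]
        rw [Finset.sum_image (fun x _ y _ h => add_left_injective h₀ h)]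
      set W₀ := W.filter (fun w => w i₀ = 0) with hW₀
      set W₁ := W.filter (fun w => ¬ w i₀ = 0) with hW₁
      have hW₀sub : W₀ ⊆ W := Finset.filter_subset _ _
      have hW₁sub : W₁ ⊆ W := Finset.filter_subset _ _
      have hinj₁ : ∀ x ∈ W₁, ∀ y ∈ W₁, f x = f y → x = y := by
        intro x hx y hy hxy
        funext j
        by_cases h : j = i₀
        · subst h
          have hx1 : x j = 1 := (zmod2_cases _).resolve_left (Finset.mem_filter.mp hx).2
          have hy1 : y j = 1 := (zmod2_cases _).resolve_left (Finset.mem_filter.mp hy).2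
          rw [hx1, hy1]
        · have h2 := congrFun hxy j
          rwa [hfj x j h, hfj y j h] at h2
      have hdisj : Disjoint W₀ (W₁.image f) := by
        rw [Finset.disjoint_left]
        intro y hy₀ hy₁
        obtain ⟨w', hw', hfw'⟩ := Finset.mem_image.mp hy₁
        have hyW := hW₀sub hy₀
        have hyi : y i₀ = 0 := (Finset.mem_filter.mp hy₀).2
        have hw'W := hW₁sub hw'
        have hw'i : w' i₀ = 1 := (zmod2_cases _).resolve_left (Finset.mem_filter.mp hw').2
        have e1 := horth h₀ hh₀C y hyW
        have e2 := horth h₀ hh₀C w' hw'W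
        rw [Finset.sum_insert hi] at e1 e2
        rw [hyi, mul_zero, zero_add] at e1
        rw [hw'i, hh₀1, one_mul] at e2
        have e3 : ∑ i ∈ t, h₀ i * w' i = ∑ i ∈ t, h₀ i * y i := by
          refine Finset.sum_congr rfl fun i hit => ?_
          rw [← hfw', hfj w' i (hmemt i hit)]
        rw [e3, e1] at e2
        simp at e2
      have hsum₁ : ∑ y ∈ W₁.image f, ‖G y‖ ^ 2 = ∑ w ∈ W₁, ‖G w‖ ^ 2 := by
        rw [Finset.sum_image hinj₁]
        exact Finset.sum_congr rfl fun w _ => by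
          rw [hGt (f w) w (fun i hit => hfj w i (hmemt i hit))]
      have ihU : ∑ y ∈ W₀ ∪ W₁.image f, ‖G y‖ ^ 2 ≤ (C₀.card : ℝ) := by
        refine ih C₀ (W₀ ∪ W₁.image f) hC₀add ?_ ?_ ?_ ?_
        · intro y hy c hc
          rcases Finset.mem_union.mp hy with hy | hy
          · refine Finset.mem_union_left _ (Finset.mem_filter.mpr
              ⟨hWC y (hW₀sub hy) c (hC₀sub hc), ?_⟩)
            show y i₀ + c i₀ = 0
            rw [(Finset.mem_filter.mp hy).2, hC₀i₀ c hc, add_zero]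
          · obtain ⟨w, hw, rfl⟩ := Finset.mem_image.mp hy
            have hfw : f w + c = f (w + c) := by
              funext j
              by_cases h : j = i₀
              · subst h
                show f w j + c j = f (w + c) j
                rw [hfi₀, hfi₀, hC₀i₀ c hc, add_zero]
              · show f w j + c j = f (w + c) j
                rw [hfj _ _ h, hfj _ _ h]
                rfl
            rw [hfw]
            refine Finset.mem_union_right _ (Finset.mem_image.mpr ⟨w + c, ?_, rfl⟩)
            refine Finset.mem_filter.mpr ⟨hWC w (hW₁sub hw) c (hC₀sub hc), ?_⟩
            have h2 := (Finset.mem_filter.mp hw).2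
            show ¬ (w i₀ + c i₀ = 0)
            rw [hC₀i₀ c hc, add_zero]
            exact h2
        · intro c hc y hy
          have hct : ∀ w ∈ W, ∑ i ∈ t, c i * w i = 0 := by
            intro w hw
            have h := horth c (hC₀sub hc) w hw
            rw [Finset.sum_insert hi, hC₀i₀ c hc, zero_mul, zero_add] at h
            exact h
          rcases Finset.mem_union.mp hy with hy | hy
          · exact hct y (hW₀sub hy)
          · obtain ⟨w, hw, rfl⟩ := Finset.mem_image.mp hy
            have h2 : ∑ i ∈ t, c i * f w i = ∑ i ∈ t, c i * w i :=
              Finset.sum_congr rfl fun i hit => by rw [hfj w i (hmemt i hit)]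
            rw [h2]
            exact hct w (hW₁sub hw)
        · intro c hc i hit
          by_cases h : i = i₀
          · exact h ▸ hC₀i₀ c hc
          · exact hsC c (hC₀sub hc) i (by simp [Finset.mem_insert, h, hit])
        · intro y hy i hit
          rcases Finset.mem_union.mp hy with hy | hy
          · by_cases h : i = i₀
            · exact h ▸ (Finset.mem_filter.mp hy).2
            · exact hsW y (hW₀sub hy) i (by simp [Finset.mem_insert, h, hit])
          · obtain ⟨w, hw, rfl⟩ := Finset.mem_image.mp hy
            by_cases h : i = i₀
            · exact h ▸ hfi₀ w
            · rw [hfj w i h]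
              exact hsW w (hW₁sub hw) i (by simp [Finset.mem_insert, h, hit])
      calc ∑ w ∈ W, ‖∑ c ∈ C, ∏ i ∈ insert i₀ t, a i ((w + c) i)‖ ^ 2
          ≤ ∑ w ∈ W, (‖G w‖ ^ 2 + ‖G (w + h₀)‖ ^ 2) :=
            Finset.sum_le_sum fun w _ => habs w
        _ = ∑ w ∈ W, ‖G w‖ ^ 2 + ∑ w ∈ W, ‖G (w + h₀)‖ ^ 2 :=
            Finset.sum_add_distrib
        _ = 2 * ∑ w ∈ W, ‖G w‖ ^ 2 := by rw [hre]; ring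
        _ = 2 * (∑ w ∈ W₀, ‖G w‖ ^ 2 + ∑ y ∈ W₁.image f, ‖G y‖ ^ 2) := by
            rw [hsum₁, Finset.sum_filter_add_sum_filter_not W (fun w => w i₀ = 0)]
        _ = 2 * ∑ y ∈ W₀ ∪ W₁.image f, ‖G y‖ ^ 2 := by
            rw [Finset.sum_union hdisj]
        _ ≤ 2 * (C₀.card : ℝ) := by linarith [ihU]
        _ = (C.card : ℝ) := hcard.symm

private lemma key2 {n : ℕ} (a : Fin n → ZMod 2 → ℂ)
    (ha : ∀ i, ‖a i 0‖ ^ 2 + ‖a i 1‖ ^ 2 = 1)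
    (C : Finset (Fin n → ZMod 2))
    (h0 : (0 : Fin n → ZMod 2) ∈ C)
    (hCadd : ∀ c ∈ C, ∀ c' ∈ C, c + c' ∈ C)
    (horth : ∀ c ∈ C, ∀ c' ∈ C, ∑ i, c i * c' i = 0) :
    ‖∑ c ∈ C, ∏ i, a i (c i)‖ ≤ 1 := by
  have hkey := key a ha Finset.univ C C hCadd hCadd
      (fun c hc w hw => horth c hc w hw)
      (fun c _ i hit => absurd (Finset.mem_univ i) hit)
      (fun w _ i hit => absurd (Finset.mem_univ i) hit)
  have hshift : ∀ w ∈ C, (∑ c ∈ C, ∏ i, a i ((w + c) i)) = ∑ c ∈ C, ∏ i, a i (c i) := by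
    intro w hw
    have himg : C.image (w + ·) = C := by
      ext c
      simp only [Finset.mem_image]
      constructor
      · rintro ⟨c', hc', rfl⟩; exact hCadd w hw c' hc'
      · intro hc
        exact ⟨w + c, hCadd w hw c hc, by rw [← add_assoc, fun_add_self, zero_add]⟩
    conv_rhs => rw [← himg]
    rw [Finset.sum_image (fun x _ y _ h => by
      simpa [← add_assoc, fun_add_self] using congrArg (fun z => w + z) h)]
  have e : ∀ w ∈ C, ‖∑ c ∈ C, ∏ i, a i ((w + c) i)‖ ^ 2
      = ‖∑ c ∈ C, ∏ i, a i (c i)‖ ^ 2 := fun w hw => by rw [hshift w hw]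
  rw [Finset.sum_congr rfl e, Finset.sum_const, nsmul_eq_mul] at hkey
  have hpos : (0:ℝ) < (C.card : ℝ) := by
    exact_mod_cast Finset.card_pos.mpr ⟨0, h0⟩
  have h2 : ‖∑ c ∈ C, ∏ i, a i (c i)‖ ^ 2 ≤ 1 := by
    by_contra hcon
    push_neg at hcon
    nlinarith
  nlinarith [norm_nonneg (∑ c ∈ C, ∏ i, a i (c i))]

/-- Theorem 8: for a self-orthogonal F₂-linear code C, the CSS state
ψ_C has maximal product overlap |C|^{-1/2}, i.e. geometric entanglement of spins
E_G(ψ_C) = log₂|C|. -/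
theorem self_orthogonal_CSS_state_GE
    (n : ℕ) (C : Submodule (ZMod 2) (Fin n → ZMod 2))
    (hso : ∀ u ∈ C, ∀ v ∈ C, ∑ i, u i * v i = (0 : ZMod 2)) :
    LambdaMax (codeState (C : Set (Fin n → ZMod 2))) = (Real.sqrt (Nat.card C))⁻¹ ∧
    EG (codeState (C : Set (Fin n → ZMod 2))) = Real.logb 2 (Nat.card C) := by
  classical
  set CF : Finset (Fin n → ZMod 2) := Finset.univ.filter (fun x => x ∈ C) with hCF
  have hmemCF : ∀ x : Fin n → ZMod 2, x ∈ CF ↔ x ∈ C := by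
    intro x; simp [hCF]
  have h0CF : (0 : Fin n → ZMod 2) ∈ CF := (hmemCF 0).mpr C.zero_mem
  have haddCF : ∀ c ∈ CF, ∀ c' ∈ CF, c + c' ∈ CF := by
    intro c hc c' hc'
    exact (hmemCF _).mpr (C.add_mem ((hmemCF c).mp hc) ((hmemCF c').mp hc'))
  have horthCF : ∀ c ∈ CF, ∀ c' ∈ CF, ∑ i, c i * c' i = (0 : ZMod 2) := by
    intro c hc c' hc'
    exact hso c ((hmemCF c).mp hc) c' ((hmemCF c').mp hc')
  have hcoe : Nat.card (C : Set (Fin n → ZMod 2)) = Nat.card C :=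
    Nat.card_congr (Equiv.subtypeEquivRight (fun x => SetLike.mem_coe))
  -- upper bound for any product state
  have hub : ∀ Φ : (Fin n → ZMod 2) → ℂ, IsProductState Φ →
      ‖qInner Φ (codeState (C : Set (Fin n → ZMod 2)))‖ ≤ (Real.sqrt (Nat.card C))⁻¹ := by
    intro Φ hΦ
    obtain ⟨φ, hφn, hφ⟩ := hΦ
    set a : Fin n → ZMod 2 → ℂ := fun i z => (starRingEnd ℂ) (φ i z) with hadef
    have ha : ∀ i, ‖a i 0‖ ^ 2 + ‖a i 1‖ ^ 2 = 1 := by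
      intro i
      have e0 : ‖a i 0‖ = ‖φ i 0‖ := Complex.norm_conj _
      have e1 : ‖a i 1‖ = ‖φ i 1‖ := Complex.norm_conj _
      rw [e0, e1]; exact hφn i
    have hq : qInner Φ (codeState (C : Set (Fin n → ZMod 2)))
        = (((Real.sqrt (Nat.card (C : Set (Fin n → ZMod 2)))))⁻¹ : ℝ)
          * ∑ x ∈ CF, ∏ i, a i (x i) := by
      rw [qInner]
      have e : ∀ x : Fin n → ZMod 2,
          (starRingEnd ℂ) (Φ x) * codeState (C : Set (Fin n → ZMod 2)) x
          = if x ∈ CF then ((((Real.sqrt (Nat.card (C : Set (Fin n → ZMod 2)))))⁻¹ : ℝ)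
              * ∏ i, a i (x i) : ℂ) else 0 := by
        intro x
        rw [codeState]
        by_cases hx : x ∈ (C : Set (Fin n → ZMod 2))
        · rw [if_pos hx, if_pos ((hmemCF x).mpr hx), hφ x, map_prod]
          ring
        · rw [if_neg hx, if_neg (fun h => hx ((hmemCF x).mp h)), mul_zero]
      rw [Finset.sum_congr rfl (fun x _ => e x), Finset.sum_ite_mem, Finset.univ_inter, Finset.mul_sum]
    rw [hq, norm_mul, Complex.norm_real, Real.norm_eq_abs,
      abs_of_nonneg (inv_nonneg.mpr (Real.sqrt_nonneg _))]
    have hb := key2 a ha CF h0CF haddCF horthCF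
    calc (Real.sqrt (Nat.card (C : Set (Fin n → ZMod 2))))⁻¹
          * ‖∑ x ∈ CF, ∏ i, a i (x i)‖
        ≤ (Real.sqrt (Nat.card (C : Set (Fin n → ZMod 2))))⁻¹ * 1 :=
          mul_le_mul_of_nonneg_left hb (inv_nonneg.mpr (Real.sqrt_nonneg _))
      _ = (Real.sqrt (Nat.card C))⁻¹ := by rw [mul_one, hcoe]
  -- the delta product state achieves the bound
  set φδ : Fin n → ZMod 2 → ℂ := fun _ z => if z = 0 then 1 else 0 with hφδ
  set Φδ : (Fin n → ZMod 2) → ℂ := fun x => ∏ i, φδ i (x i) with hΦδ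
  have hps : IsProductState Φδ := by
    refine ⟨φδ, ?_, fun x => rfl⟩
    intro i
    rw [hφδ]
    simp
  have hqδ : qInner Φδ (codeState (C : Set (Fin n → ZMod 2)))
      = (((Real.sqrt (Nat.card (C : Set (Fin n → ZMod 2)))))⁻¹ : ℝ) := by
    rw [qInner]
    rw [Finset.sum_eq_single (0 : Fin n → ZMod 2)]
    · have h1 : Φδ 0 = 1 := by
        rw [hΦδ, hφδ]; simp
      rw [h1, map_one, one_mul]
      simp only [codeState]
      exact if_pos C.zero_mem
    · intro x _ hx
      have h2 : Φδ x = 0 := by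
        obtain ⟨i, hi⟩ : ∃ i, x i ≠ 0 := by
          by_contra h; push_neg at h; exact hx (funext h)
        exact Finset.prod_eq_zero (Finset.mem_univ i) (by rw [hφδ]; simp [hi])
      rw [h2, map_zero, zero_mul]
    · intro h; exact absurd (Finset.mem_univ _) h
  have habsδ : ‖qInner Φδ (codeState (C : Set (Fin n → ZMod 2)))‖
      = (Real.sqrt (Nat.card C))⁻¹ := by
    rw [hqδ, Complex.norm_real, Real.norm_eq_abs, abs_of_nonneg (inv_nonneg.mpr (Real.sqrt_nonneg _)), hcoe]
  -- compute LambdaMax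
  have hlam : LambdaMax (codeState (C : Set (Fin n → ZMod 2))) = (Real.sqrt (Nat.card C))⁻¹ := by
    rw [LambdaMax]
    apply le_antisymm
    · apply Real.sSup_le
      · rintro r ⟨Φ, hΦ, rfl⟩
        exact hub Φ hΦ
      · exact inv_nonneg.mpr (Real.sqrt_nonneg _)
    · refine le_csSup ⟨(Real.sqrt (Nat.card C))⁻¹, ?_⟩ ⟨Φδ, hps, habsδ.symm⟩
      rintro r ⟨Φ, hΦ, rfl⟩
      exact hub Φ hΦ
  refine ⟨hlam, ?_⟩
  -- compute EG
  have hNpos : 0 < ((Nat.card C : ℕ) : ℝ) := by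
    have : Nonempty C := ⟨⟨0, C.zero_mem⟩⟩
    exact_mod_cast Nat.card_pos
  rw [EG, hlam]
  rw [inv_pow, Real.sq_sqrt (le_of_lt hNpos), Real.logb_inv, neg_neg]

end GeomEnt
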